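/- Let F be a field, n ≥ 1, and let P : Mₙ(F) → Mₙ(F) be the trace of an r-linear function such that x·[P(x), x] = 0 for all x ∈ Mₙ(F). Assume char(F) = 0 or char(F) > r. Then [P(x), x] = 0 for all x ∈ Mₙ(F), i.e., P is commuting. -/

import Mathlib

open Matrix Polynomial Finset

namespace CommAux

/- ### Generic polynomial coefficient helpers -/

theorem p1 {R : Type*} [Semiring R] (a : ℕ → R) (N k : ℕ) (hk : k < N) :
    (∑ m ∈ Finset.range N, C (a m) * X ^ m).coeff k = a k := by
  simp only [finset_sum_coeff, coeff_C_mul, coeff_X_pow, mul_ite, mul_one, mul_zero]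
  rw [Finset.sum_ite_eq (Finset.range N) k a]
  simp [hk]

theorem p2 {R : Type*} [Semiring R] (a : ℕ → R) (N k : ℕ) (hk : 1 ≤ k) (hk2 : k ≤ N) :
    (∑ m ∈ Finset.range N, C (a m) * X ^ (m+1)).coeff k = a (k-1) := by
  simp only [finset_sum_coeff, coeff_C_mul, coeff_X_pow, mul_ite, mul_one, mul_zero]
  rw [Finset.sum_eq_single (k-1)]
  · rw [if_pos (by omega : k = k - 1 + 1)]
  · intro b _ hb; rw [if_neg]; omega
  · intro hb; exfalso; apply hb; simp; omega

theorem p3 {R : Type*} [Semiring R] (a : ℕ → R) (N : ℕ) :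
    (∑ m ∈ Finset.range N, C (a m) * X ^ (m+1)).coeff 0 = 0 := by
  simp only [finset_sum_coeff, coeff_C_mul, coeff_X_pow, mul_ite, mul_one, mul_zero]
  apply Finset.sum_eq_zero; intro b _; rw [if_neg]; omega

theorem cascade {α : Type*} [Ring α] (x : α) (c : ℕ → α) (r : ℕ)
    (hrel : ∀ k, k ≤ r → x * c (k+1) + c k = 0) (htop : c (r+1) = 0) : c 0 = 0 := by
  have H : ∀ j, j ≤ r + 1 → c (r + 1 - j) = 0 := by
    intro j
    induction j with
    | zero => intro _; simpa using htop
    | succ m ih =>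
      intro hm
      have h1 := ih (by omega)
      have h2 := hrel (r - m) (by omega)
      have e1 : r - m + 1 = r + 1 - m := by omega
      rw [e1, h1, mul_zero, zero_add] at h2
      have e2 : r + 1 - (m + 1) = r - m := by omega
      rw [e2]
      exact h2
  have := H (r + 1) le_rfl
  simpa using this

variable {F : Type*} [Field F]

/-- In the edge case `|F| = r+1`, a polynomial of degree `≤ r+1` vanishing identically
has all coefficients zero except at `1` and `r+1`, which are opposite. -/
theorem edge_poly [Fintype F] {r : ℕ} (hcard : Fintype.card F = r + 1) (Qp : F[X])
    (hdeg : Qp.natDegree ≤ r + 1) (hev : ∀ t, Qp.eval t = 0) :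
    (∀ k, k ≠ 1 → k ≠ r + 1 → Qp.coeff k = 0) ∧ Qp.coeff 1 = -Qp.coeff (r + 1) := by
  have hr : 1 ≤ r := by
    have := Fintype.one_lt_card (α := F)
    omega
  set c := Qp.coeff (r + 1) with hc
  set R := Qp - C c * (X ^ (r + 1) - X) with hR
  have hevR : ∀ t, R.eval t = 0 := by
    intro t
    have ht : t ^ (r + 1) = t := by
      rw [← hcard]; exact FiniteField.pow_card t
    simp [hR, hev t, ht]
  have hcoeffR : ∀ m, r + 1 ≤ m → R.coeff m = 0 := by
    intro m hm
    rcases eq_or_lt_of_le hm with hm' | hm'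
    · simp [hR, ← hm', coeff_X_pow, coeff_X_of_ne_one (by omega : r + 1 ≠ 1), hc]
    · have h1 : Qp.coeff m = 0 := coeff_eq_zero_of_natDegree_lt (by omega)
      simp [hR, h1, coeff_X_pow, (by omega : ¬ m = r + 1),
        coeff_X_of_ne_one (by omega : m ≠ 1)]
      exact fun hcon => absurd hcon (by omega)
  have hdegR : R.natDegree < r + 1 := by
    rcases eq_or_ne R 0 with h0 | h0
    · rw [h0]; simp
    · rw [Polynomial.natDegree_lt_iff_degree_lt h0]
      rw [Polynomial.degree_lt_iff_coeff_zero]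
      intro m hm
      exact hcoeffR m (by exact_mod_cast hm)
  have hR0 : R = 0 := by
    apply Polynomial.eq_zero_of_natDegree_lt_card_of_eval_eq_zero R Function.injective_id hevR
    rw [hcard]; exact hdegR
  have hQp : Qp = C c * (X ^ (r + 1) - X) := sub_eq_zero.mp hR0
  constructor
  · intro k hk1 hk2
    rw [hQp]
    simp [coeff_X_pow, Ne.symm, hk2, coeff_X_of_ne_one hk1]
  · rw [hQp]
    simp [coeff_X_pow, (by omega : ¬ (1 : ℕ) = r + 1), coeff_X_one,
      (by omega : ¬ (r + 1 : ℕ) = 1), coeff_X_of_ne_one (by omega : r + 1 ≠ 1)]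
    rw [if_neg (by omega : ¬ r = 0)]
    ring

/- ### Matrix lemmas -/

variable {n : ℕ}

theorem EAE (A : Matrix (Fin n) (Fin n) F) (i1 j1 i2 j2 : Fin n) :
    Matrix.single i1 j1 (1:F) * A * Matrix.single i2 j2 1
      = A j1 i2 • Matrix.single i1 j2 1 := by
  ext a b
  rw [Matrix.smul_apply]
  by_cases hb : b = j2
  · rw [hb, Matrix.mul_single_apply_same]
    by_cases ha : a = i1
    · rw [ha, Matrix.single_mul_apply_same, Matrix.single_apply_same]
      simp [mul_comm]
    · rw [Matrix.single_mul_apply_of_ne 1 i1 j1 a i2 ha A,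
        Matrix.single_apply_of_row_ne (Ne.symm ha) j2 j2 1]
      simp
  · rw [Matrix.mul_single_apply_of_ne 1 i2 j2 a b hb,
      Matrix.single_apply_of_col_ne i1 a (Ne.symm hb) 1]
    simp

/-- If `yAy = 0` for every square-zero `y`, then `A` commutes with everything. -/
theorem central_of_sq (A : Matrix (Fin n) (Fin n) F)
    (hA : ∀ y : Matrix (Fin n) (Fin n) F, y * y = 0 → y * A * y = 0) :
    ∀ x : Matrix (Fin n) (Fin n) F, A * x = x * A := by
  have off : ∀ i j : Fin n, i ≠ j → A j i = 0 := by
    intro i j hij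
    have hsq : Matrix.single i j (1:F) * Matrix.single i j (1:F) = 0 :=
      Matrix.single_mul_single_of_ne 1 i j i (Ne.symm hij) 1
    have h0 := hA _ hsq
    rw [EAE] at h0
    have := congrArg (fun M : Matrix (Fin n) (Fin n) F => M i j) h0
    simpa using this
  have diag : ∀ i j : Fin n, i ≠ j → A i i = A j j := by
    intro i j hij
    have m1 : ∀ a b : Fin n, Matrix.single a i (1:F) * Matrix.single j b 1 = 0 :=
      fun a b => Matrix.single_mul_single_of_ne 1 a i j hij 1
    have m2 : ∀ a b : Fin n, Matrix.single a j (1:F) * Matrix.single i b 1 = 0 :=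
      fun a b => Matrix.single_mul_single_of_ne 1 a j i (Ne.symm hij) 1
    set y := Matrix.single i i (1:F) + Matrix.single i j 1
      - Matrix.single j i 1 - Matrix.single j j 1 with hy
    have hsq : y * y = 0 := by
      rw [hy]
      simp only [add_mul, sub_mul, mul_add, mul_sub, Matrix.single_mul_single_same, m1, m2]
      abel
    have h0 := hA _ hsq
    rw [hy] at h0
    simp only [add_mul, sub_mul, mul_add, mul_sub, EAE] at h0
    have hent := congrArg (fun M : Matrix (Fin n) (Fin n) F => M i i) h0
    have e1 : Matrix.single i j (1:F) i i = 0 :=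
      Matrix.single_apply_of_col_ne i i (Ne.symm hij) 1
    have e2 : Matrix.single j i (1:F) i i = 0 :=
      Matrix.single_apply_of_row_ne (Ne.symm hij) i i 1
    have e3 : Matrix.single j j (1:F) i i = 0 :=
      Matrix.single_apply_of_row_ne (Ne.symm hij) j i 1
    simp only [Matrix.sub_apply, Matrix.add_apply, Matrix.smul_apply, Matrix.zero_apply,
      Matrix.single_apply_same, e1, e2, e3, smul_eq_mul, mul_one, mul_zero] at hent
    have o1 := off i j hij
    have o2 := off j i (Ne.symm hij)
    rw [o1, o2] at hent
    linear_combination hent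
  intro x
  ext i j
  rw [Matrix.mul_apply, Matrix.mul_apply]
  rw [Finset.sum_eq_single i, Finset.sum_eq_single j]
  · by_cases hij : i = j
    · subst hij; ring
    · rw [diag i j hij]; ring
  · intro b _ hb; rw [off j b (Ne.symm hb), mul_zero]
  · intro hb; exact absurd (Finset.mem_univ j) hb
  · intro b _ hb; rw [off b i hb, zero_mul]
  · intro hb; exact absurd (Finset.mem_univ i) hb

/- ### The multilinear expansion machinery -/

variable {r : ℕ}

noncomputable def B (p : MultilinearMap F (fun _ : Fin r => Matrix (Fin n) (Fin n) F)
    (Matrix (Fin n) (Fin n) F)) (x : Matrix (Fin n) (Fin n) F) (s : Finset (Fin r)) :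
    Matrix (Fin n) (Fin n) F :=
  p (s.piecewise (fun _ => 1) (fun _ => x)) * x - x * p (s.piecewise (fun _ => 1) (fun _ => x))

noncomputable def cc (p : MultilinearMap F (fun _ : Fin r => Matrix (Fin n) (Fin n) F)
    (Matrix (Fin n) (Fin n) F)) (x : Matrix (Fin n) (Fin n) F) (k : ℕ) :
    Matrix (Fin n) (Fin n) F :=
  ∑ s ∈ Finset.univ.filter (fun s : Finset (Fin r) => s.card = k), B p x s

variable (p : MultilinearMap F (fun _ : Fin r => Matrix (Fin n) (Fin n) F)
    (Matrix (Fin n) (Fin n) F)) (x : Matrix (Fin n) (Fin n) F)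

theorem cc_eq_zero {k : ℕ} (hk : r < k) : cc p x k = 0 := by
  unfold cc
  rw [Finset.sum_eq_zero]
  intro s hs
  exfalso
  rw [Finset.mem_filter] at hs
  have := s.card_le_univ
  simp [hs.2, Fintype.card_fin] at this
  omega

theorem cc_zero : cc p x 0 = p (fun _ => x) * x - x * p (fun _ => x) := by
  unfold cc
  have : Finset.univ.filter (fun s : Finset (Fin r) => s.card = 0) = {∅} := by
    ext s; simp [Finset.card_eq_zero]
  rw [this, Finset.sum_singleton]
  simp [B]

theorem cc_top : cc p x r = p (fun _ => 1) * x - x * p (fun _ => 1) := by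
  unfold cc
  have : Finset.univ.filter (fun s : Finset (Fin r) => s.card = r) = {Finset.univ} := by
    ext s
    simp only [Finset.mem_filter, Finset.mem_univ, true_and, Finset.mem_singleton]
    rw [← s.card_eq_iff_eq_univ, Fintype.card_fin]
  rw [this, Finset.sum_singleton]
  simp [B]

/-- Multilinear expansion of `p` at `x + t•1`. -/
theorem expand (t : F) : p (fun _ => x + t • 1) =
    ∑ s : Finset (Fin r), t ^ s.card • p (s.piecewise (fun _ => 1) (fun _ => x)) := by
  have h1 : (fun _ : Fin r => x + t • 1) = (fun _ : Fin r => t • (1 : Matrix (Fin n) (Fin n) F))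
      + (fun _ : Fin r => x) := by
    funext i; simp [add_comm]
  rw [h1, p.map_add_univ]
  refine Finset.sum_congr rfl fun s _ => ?_
  have h2 : s.piecewise (fun _ : Fin r => t • (1 : Matrix (Fin n) (Fin n) F)) (fun _ => x)
      = fun i => (s.piecewise (fun _ => t) (fun _ => (1:F))) i •
          (s.piecewise (fun _ => (1 : Matrix (Fin n) (Fin n) F)) (fun _ => x)) i := by
    funext i
    by_cases hi : i ∈ s <;> simp [Finset.piecewise, hi]
  rw [h2, p.map_smul_univ]
  congr 1
  rw [Finset.prod_piecewise]
  simp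

/-- The master identity: for every `t`, the coefficient sum vanishes. -/
theorem master (h : ∀ y : Matrix (Fin n) (Fin n) F,
      y * (p (fun _ => y) * y - y * p (fun _ => y)) = 0) (t : F) :
    (∑ m ∈ Finset.range (r + 2), t ^ m • (x * cc p x m))
      + ∑ m ∈ Finset.range (r + 1), t ^ (m + 1) • cc p x m = 0 := by
  have h0 := h (x + t • 1)
  rw [expand] at h0
  have e1 : (∑ s : Finset (Fin r), t ^ s.card • p (s.piecewise (fun _ => 1) (fun _ => x)))
        * (x + t • 1)
      - (x + t • 1) * ∑ s : Finset (Fin r), t ^ s.card • p (s.piecewise (fun _ => 1) (fun _ => x))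
      = ∑ s : Finset (Fin r), t ^ s.card • B p x s := by
    rw [Finset.sum_mul, Finset.mul_sum, ← Finset.sum_sub_distrib]
    refine Finset.sum_congr rfl fun s _ => ?_
    rw [smul_mul_assoc, mul_smul_comm, ← smul_sub]
    congr 1
    rw [mul_add, add_mul, B]
    noncomm_ring
  rw [e1] at h0
  have e2 : (x + t • 1) * ∑ s : Finset (Fin r), t ^ s.card • B p x s
      = (∑ s : Finset (Fin r), t ^ s.card • (x * B p x s))
        + ∑ s : Finset (Fin r), t ^ (s.card + 1) • B p x s := by
    rw [Finset.mul_sum, ← Finset.sum_add_distrib]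
    refine Finset.sum_congr rfl fun s _ => ?_
    rw [add_mul, mul_smul_comm, smul_mul_assoc, one_mul, smul_smul, ← pow_succ']
  rw [e2] at h0
  have maps : ∀ s ∈ (Finset.univ : Finset (Finset (Fin r))), s.card ∈ Finset.range (r + 2) := by
    intro s _
    simp only [Finset.mem_range]
    have := s.card_le_univ
    simp only [Fintype.card_fin] at this
    omega
  have maps' : ∀ s ∈ (Finset.univ : Finset (Finset (Fin r))), s.card ∈ Finset.range (r + 1) := by
    intro s _
    simp only [Finset.mem_range]
    have := s.card_le_univ
    simp only [Fintype.card_fin] at this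
    omega
  have g1 : (∑ s : Finset (Fin r), t ^ s.card • (x * B p x s))
      = ∑ m ∈ Finset.range (r + 2), t ^ m • (x * cc p x m) := by
    rw [← Finset.sum_fiberwise_of_maps_to maps (fun s => t ^ s.card • (x * B p x s))]
    refine Finset.sum_congr rfl fun m _ => ?_
    rw [cc, Finset.mul_sum, Finset.smul_sum]
    refine Finset.sum_congr rfl fun s hs => ?_
    rw [Finset.mem_filter] at hs
    rw [hs.2]
  have g2 : (∑ s : Finset (Fin r), t ^ (s.card + 1) • B p x s)
      = ∑ m ∈ Finset.range (r + 1), t ^ (m + 1) • cc p x m := by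
    rw [← Finset.sum_fiberwise_of_maps_to maps' (fun s => t ^ (s.card + 1) • B p x s)]
    refine Finset.sum_congr rfl fun m _ => ?_
    rw [cc, Finset.smul_sum]
    refine Finset.sum_congr rfl fun s hs => ?_
    rw [Finset.mem_filter] at hs
    rw [hs.2]
  rw [g1, g2] at h0
  exact h0

/-- entrywise polynomial whose eval at `t` is the `(i,j)` entry of the master sum -/
noncomputable def Q (r : ℕ) (cF : ℕ → Matrix (Fin n) (Fin n) F)
    (x : Matrix (Fin n) (Fin n) F) (i j : Fin n) : F[X] :=
  (∑ m ∈ Finset.range (r + 2), C ((x * cF m) i j) * X ^ m)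
    + ∑ m ∈ Finset.range (r + 1), C ((cF m) i j) * X ^ (m + 1)

theorem Q_eval (cF : ℕ → Matrix (Fin n) (Fin n) F) (x : Matrix (Fin n) (Fin n) F)
    (i j : Fin n) (t : F)
    (hm : (∑ m ∈ Finset.range (r + 2), t ^ m • (x * cF m))
      + ∑ m ∈ Finset.range (r + 1), t ^ (m + 1) • cF m = 0) :
    (Q r cF x i j).eval t = 0 := by
  have h2 := congrArg (fun M : Matrix (Fin n) (Fin n) F => M i j) hm
  simp only [Matrix.add_apply, Matrix.zero_apply] at h2
  rw [Q]
  simp only [eval_add, eval_finset_sum, eval_mul, eval_pow, eval_C, eval_X]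
  have e1 : (∑ m ∈ Finset.range (r + 2), t ^ m • (x * cF m)) i j
      = ∑ m ∈ Finset.range (r + 2), (x * cF m) i j * t ^ m := by
    rw [Matrix.sum_apply]
    exact Finset.sum_congr rfl fun m _ => by simp [Matrix.smul_apply, smul_eq_mul, mul_comm]
  have e2 : (∑ m ∈ Finset.range (r + 1), t ^ (m + 1) • cF m) i j
      = ∑ m ∈ Finset.range (r + 1), (cF m) i j * t ^ (m + 1) := by
    rw [Matrix.sum_apply]
    exact Finset.sum_congr rfl fun m _ => by simp [Matrix.smul_apply, smul_eq_mul, mul_comm]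
  rw [e1, e2] at h2
  exact h2

theorem Q_deg (cF : ℕ → Matrix (Fin n) (Fin n) F) (x : Matrix (Fin n) (Fin n) F)
    (i j : Fin n) : (Q r cF x i j).natDegree ≤ r + 1 := by
  apply Polynomial.natDegree_add_le_of_degree_le
  · apply Polynomial.natDegree_sum_le_of_forall_le
    intro m hm
    refine le_trans (Polynomial.natDegree_C_mul_X_pow_le _ _) ?_
    rw [Finset.mem_range] at hm; omega
  · apply Polynomial.natDegree_sum_le_of_forall_le
    intro m hm
    refine le_trans (Polynomial.natDegree_C_mul_X_pow_le _ _) ?_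
    rw [Finset.mem_range] at hm; omega

theorem Q_coeff_zero (cF : ℕ → Matrix (Fin n) (Fin n) F) (x : Matrix (Fin n) (Fin n) F)
    (i j : Fin n) : (Q r cF x i j).coeff 0 = (x * cF 0) i j := by
  rw [Q, coeff_add, p1 _ _ _ (by omega), p3, add_zero]

theorem Q_coeff_succ (cF : ℕ → Matrix (Fin n) (Fin n) F) (x : Matrix (Fin n) (Fin n) F)
    (i j : Fin n) {k : ℕ} (hk : k ≤ r) :
    (Q r cF x i j).coeff (k + 1) = (x * cF (k + 1)) i j + (cF k) i j := by
  rw [Q, coeff_add, p1 _ _ _ (by omega), p2 _ _ _ (by omega) (by omega)]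
  norm_num

end CommAux

open CommAux

/-- If `P` is the trace of an `r`-linear function on `Mₙ(F)` and `x·[P(x),x] = 0` for all
`x`, then `[P(x),x] = 0` for all `x`, i.e. `P` is commuting (`char F = 0` or `char F > r`). -/
theorem commuting_of_mul_left_commutator_eq_zero {F : Type*} [Field F] (n r : ℕ) (hn : 1 ≤ n)
    (hchar : ∀ p : ℕ, CharP F p → p = 0 ∨ r < p)
    (p : MultilinearMap F (fun _ : Fin r => Matrix (Fin n) (Fin n) F)
      (Matrix (Fin n) (Fin n) F))
    (h : ∀ x : Matrix (Fin n) (Fin n) F, x * ⁅p (fun _ => x), x⁆ = 0) :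
    ∀ x : Matrix (Fin n) (Fin n) F, ⁅p (fun _ => x), x⁆ = 0 := by
  classical
  have h' : ∀ y : Matrix (Fin n) (Fin n) F,
      y * (p (fun _ => y) * y - y * p (fun _ => y)) = 0 := by
    intro y
    have := h y
    rwa [Ring.lie_def] at this
  have hmaster := fun (y : Matrix (Fin n) (Fin n) F) (t : F) => master p y h' t
  intro x
  rw [Ring.lie_def]
  suffices hS : cc p x 0 = 0 by rw [← cc_zero p x]; exact hS
  by_cases HV : ∀ Qp : F[X], Qp.natDegree ≤ r + 1 → (∀ t, Qp.eval t = 0) → Qp = 0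
  · -- big field case: all coefficients vanish
    have hrel : ∀ k, k ≤ r → x * cc p x (k+1) + cc p x k = 0 := by
      intro k hk
      ext i j
      have hQ0 := HV (Q r (cc p x) x i j) (Q_deg _ _ _ _)
        (fun t => Q_eval (cc p x) x i j t (hmaster x t))
      have hco := Q_coeff_succ (cc p x) x i j hk
      rw [hQ0, Polynomial.coeff_zero] at hco
      rw [Matrix.add_apply, Matrix.zero_apply]
      exact hco.symm
    exact cascade x (cc p x) r hrel (cc_eq_zero p x (by omega))
  · -- edge case: finite field with exactly r+1 elements
    have hfin : Finite F := by
      by_contra hinf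
      rw [not_finite_iff_infinite] at hinf
      exact HV fun Qp _ hev => Polynomial.zero_of_eval_zero Qp hev
    haveI := hfin
    haveI : Fintype F := Fintype.ofFinite F
    have hcardle : Fintype.card F ≤ r + 1 := by
      by_contra hgt
      push_neg at hgt
      exact HV fun Qp hdeg hev =>
        Polynomial.eq_zero_of_natDegree_lt_card_of_eval_eq_zero Qp Function.injective_id hev
          (by simpa using by omega : Qp.natDegree < Fintype.card F)
    set q := ringChar F with hq
    haveI hCh : CharP F q := ringChar.charP F
    have hq0 : q ≠ 0 := CharP.char_ne_zero_of_finite F q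
    obtain ⟨m, hpr, hcardeq⟩ := FiniteField.card F q
    have hrq : r < q := by
      rcases hchar q hCh with h0 | hlt
      · exact absurd h0 hq0
      · exact hlt
    have hqcard : q ≤ Fintype.card F := by
      rw [hcardeq]
      exact Nat.le_self_pow (by exact_mod_cast m.ne_zero) q
    have hcard : Fintype.card F = r + 1 := by omega
    have hr1 : 1 ≤ r := by
      have := Fintype.one_lt_card (α := F)
      omega
    -- edge relations, for every y
    have hrelE : ∀ y : Matrix (Fin n) (Fin n) F,
        (∀ k, 1 ≤ k → k < r → y * cc p y (k+1) + cc p y k = 0)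
        ∧ y * cc p y 1 + cc p y 0 = -(y * cc p y (r+1) + cc p y r) := by
      intro y
      have hE := fun (i j : Fin n) => edge_poly hcard (Q r (cc p y) y i j) (Q_deg _ _ _ _)
        (fun t => Q_eval (cc p y) y i j t (hmaster y t))
      constructor
      · intro k hk1 hkr
        ext i j
        have hco := Q_coeff_succ (cc p y) y i j (le_of_lt hkr)
        have h0 := (hE i j).1 (k+1) (by omega) (by omega)
        rw [hco] at h0
        rw [Matrix.add_apply, Matrix.zero_apply]
        exact h0
      · ext i j
        have hco1 := Q_coeff_succ (cc p y) y i j (by omega : 0 ≤ r)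
        have hco2 := Q_coeff_succ (cc p y) y i j (le_refl r)
        have h0 := (hE i j).2
        rw [hco1, hco2] at h0
        rw [Matrix.add_apply, Matrix.neg_apply, Matrix.add_apply]
        simpa using h0
    set A := p (fun _ : Fin r => (1 : Matrix (Fin n) (Fin n) F)) with hAdef
    -- square-zero matrices kill A
    have hsq : ∀ y : Matrix (Fin n) (Fin n) F, y * y = 0 → y * A * y = 0 := by
      intro y hy2
      have hcas : ∀ jj, jj ≤ r - 1 →
          cc p y (r - jj) = (-1:F)^jj • (y^jj * (A * y - y * A)) := by
        intro jj
        induction jj with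
        | zero =>
          intro _
          simpa using cc_top p y
        | succ mm ih =>
          intro hm
          have h1 := ih (by omega)
          have h2 := (hrelE y).1 (r - mm - 1) (by omega) (by omega)
          have e1 : r - mm - 1 + 1 = r - mm := by omega
          rw [e1, h1] at h2
          have e2 : r - (mm + 1) = r - mm - 1 := by omega
          rw [e2]
          have : cc p y (r - mm - 1)
              = -(y * ((-1:F)^mm • (y^mm * (A * y - y * A)))) := by
            linear_combination (norm := noncomm_ring) h2
          rw [this, mul_smul_comm, ← mul_assoc, ← pow_succ']
          rw [← neg_smul]
          congr 1
          ring
      have hc1 : cc p y 1 = (-1:F)^(r-1) • (y^(r-1) * (A * y - y * A)) := by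
        have := hcas (r-1) le_rfl
        rwa [(by omega : r - (r-1) = 1)] at this
      have hc0 : cc p y 0 = -(y * cc p y 1) - (A * y - y * A) := by
        have h2 := (hrelE y).2
        rw [cc_eq_zero p y (k := r+1) (by omega), cc_top p y] at h2
        rw [← hAdef] at h2
        linear_combination (norm := noncomm_ring) h2
      have e0 : y * cc p y 0 = 0 := by
        have := h' y
        rwa [← cc_zero p y] at this
      have hyy : ∀ w : Matrix (Fin n) (Fin n) F, y * (y * w) = 0 := by
        intro w
        rw [← mul_assoc, hy2, zero_mul]
      rw [hc0, mul_sub, mul_neg] at e0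
      rw [← mul_assoc y y (cc p y 1), hy2, zero_mul, neg_zero, zero_sub, neg_eq_zero] at e0
      rw [mul_sub, ← mul_assoc] at e0
      rw [sub_eq_zero] at e0
      rw [e0]
      exact hyy A
    have hAc := central_of_sq A hsq
    have htop0 : cc p x r = 0 := by
      rw [cc_top p x, ← hAdef, hAc x, sub_self]
    have hrelx : ∀ k, k ≤ r → x * cc p x (k+1) + cc p x k = 0 := by
      intro k hk
      rcases Nat.eq_zero_or_pos k with hk0 | hkpos
      · subst hk0
        have h2 := (hrelE x).2
        rw [cc_eq_zero p x (k := r+1) (by omega), htop0, mul_zero, add_zero, neg_zero] at h2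
        simpa using h2
      · rcases eq_or_lt_of_le hk with hkr | hkr
        · rw [hkr, cc_eq_zero p x (k := r+1) (by omega), htop0, mul_zero, add_zero]
        · exact (hrelE x).1 k hkpos hkr
    exact cascade x (cc p x) r hrelx (cc_eq_zero p x (by omega))
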